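/- For the Grover matrix A_G = (1/3)[[-1,2,2],[2,-1,2],[2,2,-1]] and any function φ : ℤ → ℂ not identically zero, the function Ψ(x) = (φ(x), (1/2)(φ(x) + φ(x-1)), φ(x-1)) satisfies U_{A_G}Ψ = Ψ, and hence μ(x) = (5/4)(|φ(x)|² + |φ(x-1)|²) + (1/2)·Re(φ(x)·conj(φ(x-1))) is a stationary measure of the three-state Grover walk. -/

import Mathlib

open Complex Matrix Finset

noncomputable def walk (A : Matrix (Fin 3) (Fin 3) ℂ) (Ψ : ℤ → Fin 3 → ℂ) : ℤ → Fin 3 → ℂ :=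
  fun x => ![∑ j, A 0 j * Ψ (x + 1) j, ∑ j, A 1 j * Ψ x j, ∑ j, A 2 j * Ψ (x - 1) j]

noncomputable def groverMatrix : Matrix (Fin 3) (Fin 3) ℂ :=
  (1 / 3 : ℂ) • !![-1, 2, 2; 2, -1, 2; 2, 2, -1]

theorem grover_type2_stationary (φ : ℤ → ℂ) (hφ : ∃ x, φ x ≠ 0)
    (Ψ : ℤ → Fin 3 → ℂ)
    (hΨ : Ψ = fun x => ![φ x, (1 / 2 : ℂ) * (φ x + φ (x - 1)), φ (x - 1)]) :
    walk groverMatrix Ψ = Ψ ∧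
    ∀ x : ℤ, ∑ i, ‖Ψ x i‖ ^ 2 =
      (5 / 4) * (‖φ x‖ ^ 2 + ‖φ (x - 1)‖ ^ 2) + (1 / 2) * (φ x * (starRingEnd ℂ) (φ (x - 1))).re := by
  constructor
  · funext x i
    fin_cases i <;>
      simp [walk, groverMatrix, hΨ, Fin.sum_univ_three, add_sub_cancel_right] <;> ring
  · intro x
    simp only [hΨ, Fin.sum_univ_three, Matrix.cons_val_zero, Matrix.cons_val_one,
      Matrix.head_cons, Matrix.cons_val_two, Matrix.tail_cons]
    simp only [← Complex.normSq_eq_norm_sq, Complex.sq_norm,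
      Complex.normSq_apply, Complex.mul_re, Complex.mul_im, Complex.add_re, Complex.add_im,
      Complex.conj_re, Complex.conj_im, Complex.div_re, Complex.div_im, Complex.one_re,
      Complex.one_im, Complex.re_ofNat, Complex.im_ofNat, Complex.normSq_ofNat]
    norm_num; ring
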